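/- arXiv:1806.11135 — 2 statements merged into one kernel-verified Lean document; each statement's English description precedes it below -/
import Mathlib

section
/- Let β > 0, r₀ > 0, α > 3, m > 0, M ≥ 0, L ≥ 0, and set ρ(r) = (1+r²)^{α/2}. Let u, u₀, y, y₀ : (0, r₀] → ℝ be functions with y(r) ≥ m and 0 ≤ y₀(r) ≤ M for all r ∈ (0, r₀], and define g(r) = y(r)·e^{−βu(r)} and g₀(r) = y₀(r)·e^{−βu₀(r)}. Set δ = sup_{0<r≤r₀} ρ(r)|u₀(r) − u(r)| and assume δ ≤ 1 and sup_{0<r≤r₀} |y₀(r) − y(r)| ≤ L·δ. Then for every r ∈ (0, r₀], ρ(r)·|g₀(r) − g(r)|/g(r) ≤ (ρ(r₀)/m)·(L + M·β·e^{β})·δ. -/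
open MeasureTheory

noncomputable section

lemma abs_exp_sub_one_le_aux (t : ℝ) : |Real.exp t - 1| ≤ |t| * Real.exp |t| := by
  rcases le_or_gt 0 t with h | h
  · rw [abs_of_nonneg h, abs_of_nonneg (by linarith [Real.one_le_exp h] : (0:ℝ) ≤ Real.exp t - 1)]
    have hprod : Real.exp (-t) * Real.exp t = 1 := by rw [← Real.exp_add]; simp
    have h3 : (-t + 1) * Real.exp t ≤ Real.exp (-t) * Real.exp t :=
      mul_le_mul_of_nonneg_right (Real.add_one_le_exp (-t)) (Real.exp_pos t).le
    nlinarith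
  · have hlt : Real.exp t < 1 := by
      have := Real.exp_lt_exp.mpr h
      simpa using this
    rw [abs_of_neg h, abs_of_nonpos (by linarith : Real.exp t - 1 ≤ 0)]
    have h1 : (1:ℝ) ≤ Real.exp (-t) := Real.one_le_exp (by linarith)
    nlinarith [Real.add_one_le_exp t, mul_nonneg (le_of_lt (neg_pos.mpr h)) (sub_nonneg.mpr h1)]

/-- Core-region estimate in the proof of Theorem 4.2 (conditional
well-posedness of the HNCN iteration): with g = y e^{-βu}, g₀ = y₀ e^{-βu₀},
y ≥ m, 0 ≤ y₀ ≤ M, δ = sup_{0<r≤r₀} ρ(r)|u₀(r)-u(r)| ≤ 1 and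
sup_{0<r≤r₀} |y₀ - y| ≤ Lδ, one has
ρ(r)|g₀(r)-g(r)|/g(r) ≤ (ρ(r₀)/m)(L + Mβe^β)δ on (0,r₀]. -/
theorem hncn_core_region_estimate (β r₀ α m M L : ℝ)
    (hβ : 0 < β) (hr₀ : 0 < r₀) (hα : 3 < α)
    (hm : 0 < m) (hM : 0 ≤ M) (hL : 0 ≤ L)
    (u u₀ y y₀ g g₀ : ℝ → ℝ)
    (hy : ∀ r, 0 < r → r ≤ r₀ → m ≤ y r)
    (hy₀ : ∀ r, 0 < r → r ≤ r₀ → 0 ≤ y₀ r ∧ y₀ r ≤ M)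
    (hg : ∀ r, 0 < r → r ≤ r₀ → g r = y r * Real.exp (-(β * u r)))
    (hg₀ : ∀ r, 0 < r → r ≤ r₀ → g₀ r = y₀ r * Real.exp (-(β * u₀ r)))
    (δ : ℝ)
    (hbdd : BddAbove (Set.range fun r : Set.Ioc (0 : ℝ) r₀ =>
      (1 + (r : ℝ) ^ 2) ^ (α / 2) * |u₀ (r : ℝ) - u (r : ℝ)|))
    (hδ : δ = ⨆ r : Set.Ioc (0 : ℝ) r₀,
      (1 + (r : ℝ) ^ 2) ^ (α / 2) * |u₀ (r : ℝ) - u (r : ℝ)|)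
    (hδ1 : δ ≤ 1)
    (hyy₀ : ∀ r, 0 < r → r ≤ r₀ → |y₀ r - y r| ≤ L * δ) :
    ∀ r, 0 < r → r ≤ r₀ →
      (1 + r ^ 2) ^ (α / 2) * |g₀ r - g r| / g r
        ≤ ((1 + r₀ ^ 2) ^ (α / 2) / m) * (L + M * β * Real.exp β) * δ := by
  intro r hr hrr₀
  set P : ℝ := (1 + r ^ 2) ^ (α / 2) with hP
  set Q : ℝ := (1 + r₀ ^ 2) ^ (α / 2) with hQ
  have hα2 : 0 ≤ α / 2 := by linarith
  have hP1 : (1:ℝ) ≤ P := Real.one_le_rpow (by nlinarith) hα2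
  have hQ1 : (1:ℝ) ≤ Q := Real.one_le_rpow (by nlinarith) hα2
  have hPQ : P ≤ Q := Real.rpow_le_rpow (by positivity) (by nlinarith) hα2
  have hkey : P * |u₀ r - u r| ≤ δ := by
    rw [hδ]
    exact le_ciSup hbdd (⟨r, hr, hrr₀⟩ : Set.Ioc (0:ℝ) r₀)
  have hB0 : (0:ℝ) ≤ |u₀ r - u r| := abs_nonneg _
  have hδ0 : (0:ℝ) ≤ δ := le_trans (mul_nonneg (by linarith) hB0) hkey
  have hB1 : |u₀ r - u r| ≤ 1 := by nlinarith
  have hA : |y₀ r - y r| ≤ L * δ := hyy₀ r hr hrr₀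
  have hym : m ≤ y r := hy r hr hrr₀
  obtain ⟨hy₀0, hy₀M⟩ := hy₀ r hr hrr₀
  set E : ℝ := Real.exp (-(β * u r)) with hE
  have hEpos : 0 < E := Real.exp_pos _
  have hgr : g r = y r * E := hg r hr hrr₀
  have hgpos : 0 < g r := by rw [hgr]; exact mul_pos (lt_of_lt_of_le hm hym) hEpos
  set t : ℝ := β * u r - β * u₀ r with ht
  have hE₀ : Real.exp (-(β * u₀ r)) = E * Real.exp t := by
    rw [hE, ← Real.exp_add, ht]; ring_nf
  have htabs : |t| = β * |u₀ r - u r| := by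
    rw [ht, show β * u r - β * u₀ r = β * (u r - u₀ r) by ring, abs_mul,
      abs_of_pos hβ, abs_sub_comm]
  have htβ : |t| ≤ β := by rw [htabs]; nlinarith
  have hexp : |Real.exp t - 1| ≤ β * |u₀ r - u r| * Real.exp β := by
    calc |Real.exp t - 1| ≤ |t| * Real.exp |t| := abs_exp_sub_one_le_aux t
      _ ≤ |t| * Real.exp β :=
          mul_le_mul_of_nonneg_left (Real.exp_le_exp.mpr htβ) (abs_nonneg t)
      _ = β * |u₀ r - u r| * Real.exp β := by rw [htabs]
  have hdiff : |g₀ r - g r| ≤ |y₀ r - y r| * E + M * (β * |u₀ r - u r| * Real.exp β) * E := by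
    have heq : g₀ r - g r = (y₀ r - y r) * E + y₀ r * E * (Real.exp t - 1) := by
      rw [hg₀ r hr hrr₀, hgr, hE₀]; ring
    rw [heq]
    calc |(y₀ r - y r) * E + y₀ r * E * (Real.exp t - 1)|
        ≤ |(y₀ r - y r) * E| + |y₀ r * E * (Real.exp t - 1)| := abs_add_le _ _
      _ = |y₀ r - y r| * E + y₀ r * E * |Real.exp t - 1| := by
          rw [abs_mul, abs_mul, abs_mul, abs_of_pos hEpos, abs_of_nonneg hy₀0]
      _ ≤ |y₀ r - y r| * E + M * (β * |u₀ r - u r| * Real.exp β) * E := by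
          have h1 : y₀ r * E * |Real.exp t - 1|
              ≤ M * E * (β * |u₀ r - u r| * Real.exp β) :=
            mul_le_mul (mul_le_mul_of_nonneg_right hy₀M hEpos.le) hexp
              (abs_nonneg _) (by positivity)
          nlinarith
  clear_value P Q E t
  rw [div_le_iff₀ hgpos]
  have hexpβ := (Real.exp_pos β).le
  have hP0 : (0:ℝ) ≤ P := by linarith
  have hQ0 : (0:ℝ) ≤ Q := by linarith
  have h2 : P * |g₀ r - g r| ≤ Q * L * δ * E + Q * (M * β * Real.exp β) * δ * E := by
    have h4 : P * (|y₀ r - y r| * E) ≤ Q * (L * δ * E) := by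
      have h4a : |y₀ r - y r| * E ≤ L * δ * E := mul_le_mul_of_nonneg_right hA hEpos.le
      exact mul_le_mul hPQ h4a (mul_nonneg (abs_nonneg _) hEpos.le) hQ0
    have h5 : (M * Real.exp β * E) * (β * (P * |u₀ r - u r|))
        ≤ (M * Real.exp β * E) * (β * δ) :=
      mul_le_mul_of_nonneg_left (mul_le_mul_of_nonneg_left hkey hβ.le)
        (mul_nonneg (mul_nonneg hM hexpβ) hEpos.le)
    have h6 : (M * Real.exp β * E) * (β * δ)
        ≤ Q * ((M * Real.exp β * E) * (β * δ)) :=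
      le_mul_of_one_le_left (mul_nonneg (mul_nonneg (mul_nonneg hM hexpβ) hEpos.le)
        (mul_nonneg hβ.le hδ0)) hQ1
    calc P * |g₀ r - g r|
        ≤ P * (|y₀ r - y r| * E + M * (β * |u₀ r - u r| * Real.exp β) * E) :=
          mul_le_mul_of_nonneg_left hdiff hP0
      _ = P * (|y₀ r - y r| * E)
          + (M * Real.exp β * E) * (β * (P * |u₀ r - u r|)) := by ring
      _ ≤ Q * (L * δ * E) + (M * Real.exp β * E) * (β * δ) := add_le_add h4 h5
      _ ≤ Q * (L * δ * E) + Q * ((M * Real.exp β * E) * (β * δ)) := by linarith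
      _ = Q * L * δ * E + Q * (M * β * Real.exp β) * δ * E := by ring
  have hc : (0:ℝ) ≤ (L + M * β * Real.exp β) * δ * E :=
    mul_nonneg (mul_nonneg (by positivity) hδ0) hEpos.le
  have hQy : Q ≤ Q / m * y r := by
    rw [div_mul_eq_mul_div, le_div_iff₀ hm]
    exact mul_le_mul_of_nonneg_left hym hQ0
  calc P * |g₀ r - g r|
      ≤ Q * L * δ * E + Q * (M * β * Real.exp β) * δ * E := h2
    _ = Q * ((L + M * β * Real.exp β) * δ * E) := by ring
    _ ≤ (Q / m * y r) * ((L + M * β * Real.exp β) * δ * E) :=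
        mul_le_mul_of_nonneg_right hQy hc
    _ = Q / m * (L + M * β * Real.exp β) * δ * g r := by rw [hgr]; ring
end
end

section
/- Let α > 3, ρ_α(x) = (1+|x|²)^{α/2}, and q ∈ (0,1). There exists a constant C > 0, depending only on α and q, with the following property: for every measurable w : ℝ³ → ℝ with ‖w‖_{L^∞_ρ} = ess sup_x ρ_α(x)|w(x)| < ∞ and ∫_{ℝ³} |w(x)| dx ≤ q, the series Σ_{n≥1} W_n of the n-fold autoconvolutions W_n = w * w * ⋯ * w (n factors, W₁ = w) converges in the norm ‖·‖_{L^∞_ρ} to a function W_Σ with ‖W_Σ‖_{L^∞_ρ} ≤ C · ‖w‖_{L^∞_ρ}; that is, ess sup_x ρ_α(x)|W_Σ(x) − Σ_{n=1}^N W_n(x)| → 0 as N → ∞. -/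
open MeasureTheory

noncomputable section

abbrev E3 := EuclideanSpace ℝ (Fin 3)

/-- Weighted L^∞ norm with weight ρ_α(x) = (1+|x|²)^{α/2}. -/
def weightedNorm (α : ℝ) (f : E3 → ℝ) : ENNReal :=
  essSup (fun x => ENNReal.ofReal ((1 + ‖x‖ ^ 2) ^ (α / 2) * |f x|)) volume

/-- Convolution on ℝ³: (f*g)(x) = ∫ f(x-y) g(y) dy. -/
def conv3 (f g : E3 → ℝ) : E3 → ℝ := fun x => ∫ y, f (x - y) * g y

/-- Fourier transform of a real-valued function on ℝ³:
𝓕f(ξ) = ∫ f(x) e^{-2πi x·ξ} dx. -/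
def FT (f : E3 → ℝ) : E3 → ℂ := FourierTransform.fourier (fun x => (f x : ℂ))

/-- A function on ℝ³ is radial if it only depends on the norm. -/
def IsRadial (f : E3 → ℝ) : Prop := ∀ x y : E3, ‖x‖ = ‖y‖ → f x = f y
/-- n-fold autoconvolution: iterConv w 0 = W₁ = w, iterConv w n = W_{n+1}. -/
def iterConv (w : E3 → ℝ) : ℕ → (E3 → ℝ)
  | 0 => w
  | n + 1 => conv3 (iterConv w n) w

/-! ### Auxiliary material -/

/-- The weight function. -/
def rho (α : ℝ) (x : E3) : ℝ := (1 + ‖x‖ ^ 2) ^ (α / 2)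

lemma rho_pos (α : ℝ) (x : E3) : 0 < rho α x :=
  Real.rpow_pos_of_pos (by positivity) _

lemma one_le_rho {α : ℝ} (hα : 0 ≤ α) (x : E3) : 1 ≤ rho α x := by
  have h : (1 : ℝ) ^ (α / 2) ≤ (1 + ‖x‖ ^ 2) ^ (α / 2) :=
    Real.rpow_le_rpow (by norm_num) (by nlinarith [sq_nonneg ‖x‖]) (by linarith)
  simpa [Real.one_rpow, rho] using h

lemma abs_le_of_rho_bound {α : ℝ} (hα : 0 ≤ α) {g : E3 → ℝ} {B : ℝ} {x : E3}
    (h : rho α x * |g x| ≤ B) : |g x| ≤ B := by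
  have h1 : 1 ≤ rho α x := one_le_rho hα x
  nlinarith [abs_nonneg (g x)]

lemma rho_le_mul {α : ℝ} (hα : 0 ≤ α) {c : ℝ} (hc : 1 ≤ c) {x z : E3}
    (h : ‖x‖ ≤ c * ‖z‖) : rho α x ≤ c ^ α * rho α z := by
  have hc0 : (0:ℝ) ≤ c := le_trans zero_le_one hc
  have hx2 : ‖x‖ ^ 2 ≤ (c * ‖z‖) ^ 2 := pow_le_pow_left₀ (norm_nonneg x) h 2
  have h1 : 1 + ‖x‖ ^ 2 ≤ c ^ 2 * (1 + ‖z‖ ^ 2) := by nlinarith [norm_nonneg z]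
  have h2 : rho α x ≤ (c ^ 2 * (1 + ‖z‖ ^ 2)) ^ (α / 2) :=
    Real.rpow_le_rpow (by positivity) h1 (by linarith)
  have h3 : (c ^ 2 * (1 + ‖z‖ ^ 2)) ^ (α / 2)
      = (c ^ 2) ^ (α / 2) * (1 + ‖z‖ ^ 2) ^ (α / 2) :=
    Real.mul_rpow (by positivity) (by positivity)
  have h4 : ((c ^ 2 : ℝ)) ^ (α / 2) = c ^ α := by
    rw [← Real.rpow_natCast c 2, ← Real.rpow_mul hc0]
    congr 1
    push_cast
    ring
  calc rho α x ≤ (c ^ 2 * (1 + ‖z‖ ^ 2)) ^ (α / 2) := h2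
    _ = c ^ α * rho α z := by rw [h3, h4]; rfl

lemma rho_inv_integrable {α : ℝ} (hα : 3 < α) :
    Integrable (fun x : E3 => (rho α x)⁻¹) := by
  have hfr : ((Module.finrank ℝ E3 : ℝ)) < α := by
    simp only [finrank_euclideanSpace, Fintype.card_fin]
    exact_mod_cast hα
  have h := integrable_rpow_neg_one_add_norm_sq (E := E3) (μ := volume) hfr
  refine h.congr (Filter.Eventually.of_forall fun x => ?_)
  show (1 + ‖x‖ ^ 2) ^ (-α / 2) = ((1 + ‖x‖ ^ 2) ^ (α / 2))⁻¹
  rw [← Real.rpow_neg (by positivity), neg_div]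

lemma integrable_of_rho_bound {α : ℝ} (hα : 3 < α) {f : E3 → ℝ} {F : ℝ}
    (hm : Measurable f) (hb : ∀ᵐ x, rho α x * |f x| ≤ F) : Integrable f := by
  refine (((rho_inv_integrable hα).const_mul F)).mono'
    hm.aestronglyMeasurable ?_
  filter_upwards [hb] with x hx
  have h0 := rho_pos α x
  rw [Real.norm_eq_abs]
  have heq : |f x| = (rho α x * |f x|) * (rho α x)⁻¹ := by
    field_simp
  rw [heq]
  exact mul_le_mul_of_nonneg_right hx (inv_nonneg.2 h0.le)

/-- The key pointwise convolution estimate with split parameter θ. -/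
lemma conv3_bound {α : ℝ} (hα : 0 ≤ α) {f w : E3 → ℝ}
    (hfi : Integrable f) (hwi : Integrable w)
    {F W θ : ℝ} (hF : 0 ≤ F) (hW : 0 ≤ W) (hθ0 : 0 < θ) (hθ1 : θ < 1)
    (hfb : ∀ᵐ z, rho α z * |f z| ≤ F) (hwb : ∀ᵐ z, rho α z * |w z| ≤ W) :
    ∀ x, rho α x * |conv3 f w x| ≤
      (1 - θ)⁻¹ ^ α * F * (∫ z, |w z|) + θ⁻¹ ^ α * W * (∫ z, |f z|) := by
  intro x
  set c1 : ℝ := (1 - θ)⁻¹ ^ α with hc1def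
  set c2 : ℝ := θ⁻¹ ^ α with hc2def
  have h1θ : (0:ℝ) < 1 - θ := by linarith
  have hc1nn : 0 ≤ c1 := Real.rpow_nonneg (by positivity) _
  have hc2nn : 0 ≤ c2 := Real.rpow_nonneg (by positivity) _
  have hfb' : ∀ᵐ y, rho α (x - y) * |f (x - y)| ≤ F :=
    ((Measure.measurePreserving_sub_left volume x).quasiMeasurePreserving).ae hfb
  have hrx := rho_pos α x
  -- pointwise bound on the integrand
  have hpt : ∀ᵐ y, |f (x - y) * w y| ≤
      (rho α x)⁻¹ * (c1 * F * |w y| + c2 * W * |f (x - y)|) := by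
    filter_upwards [hfb', hwb] with y hfy hwy
    have key : rho α x * (|f (x - y)| * |w y|) ≤
        c1 * F * |w y| + c2 * W * |f (x - y)| := by
      rcases le_or_gt ‖y‖ (θ * ‖x‖) with hy | hy
      · -- ‖x - y‖ is large
        have hnn : ‖x‖ - ‖y‖ ≤ ‖x - y‖ := norm_sub_norm_le x y
        have hxle : ‖x‖ ≤ (1 - θ)⁻¹ * ‖x - y‖ := by
          rw [inv_mul_eq_div, le_div_iff₀ h1θ]
          nlinarith
        have hcge : (1:ℝ) ≤ (1 - θ)⁻¹ := by
          rw [le_inv_comm₀ one_pos h1θ]; linarith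
        have hrr : rho α x ≤ c1 * rho α (x - y) := rho_le_mul hα hcge hxle
        have h5 : rho α x * |f (x - y)| ≤ c1 * F := by
          calc rho α x * |f (x - y)| ≤ c1 * rho α (x - y) * |f (x - y)| :=
                mul_le_mul_of_nonneg_right hrr (abs_nonneg _)
            _ = c1 * (rho α (x - y) * |f (x - y)|) := by ring
            _ ≤ c1 * F := mul_le_mul_of_nonneg_left hfy hc1nn
        have h6 : rho α x * (|f (x - y)| * |w y|) ≤ c1 * F * |w y| := by
          calc rho α x * (|f (x - y)| * |w y|)
              = (rho α x * |f (x - y)|) * |w y| := by ring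
            _ ≤ (c1 * F) * |w y| := mul_le_mul_of_nonneg_right h5 (abs_nonneg _)
        refine h6.trans (le_add_of_nonneg_right (by positivity))
      · -- ‖y‖ is large
        have hxle : ‖x‖ ≤ θ⁻¹ * ‖y‖ := by
          rw [inv_mul_eq_div, le_div_iff₀ hθ0]
          nlinarith
        have hcge : (1:ℝ) ≤ θ⁻¹ := by
          rw [le_inv_comm₀ one_pos hθ0]; linarith
        have hrr : rho α x ≤ c2 * rho α y := rho_le_mul hα hcge hxle
        have h5 : rho α x * |w y| ≤ c2 * W := by
          calc rho α x * |w y| ≤ c2 * rho α y * |w y| :=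
                mul_le_mul_of_nonneg_right hrr (abs_nonneg _)
            _ = c2 * (rho α y * |w y|) := by ring
            _ ≤ c2 * W := mul_le_mul_of_nonneg_left hwy hc2nn
        have h6 : rho α x * (|f (x - y)| * |w y|) ≤ c2 * W * |f (x - y)| := by
          calc rho α x * (|f (x - y)| * |w y|)
              = (rho α x * |w y|) * |f (x - y)| := by ring
            _ ≤ (c2 * W) * |f (x - y)| := mul_le_mul_of_nonneg_right h5 (abs_nonneg _)
        refine h6.trans (le_add_of_nonneg_left (by positivity))
    have heq : |f (x - y)| * |w y| =
        (rho α x)⁻¹ * (rho α x * (|f (x - y)| * |w y|)) := by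
      field_simp
    rw [abs_mul, heq]
    exact mul_le_mul_of_nonneg_left key (inv_nonneg.2 hrx.le)
  -- integrate the pointwise bound
  have hfi' : Integrable (fun y => f (x - y)) := hfi.comp_sub_left x
  have hInt : Integrable (fun y =>
      (rho α x)⁻¹ * (c1 * F * |w y| + c2 * W * |f (x - y)|)) :=
    (((hwi.abs.const_mul (c1 * F))).add ((hfi'.abs.const_mul (c2 * W)))).const_mul _
  have h7 : |conv3 f w x| ≤
      ∫ y, (rho α x)⁻¹ * (c1 * F * |w y| + c2 * W * |f (x - y)|) := by
    have h8 : |conv3 f w x| ≤ ∫ y, |f (x - y) * w y| := by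
      show |∫ y, f (x - y) * w y| ≤ ∫ y, |f (x - y) * w y|
      simpa [Real.norm_eq_abs, abs_mul] using
        norm_integral_le_integral_norm (μ := volume) (fun y => f (x - y) * w y)
    refine h8.trans (integral_mono_of_nonneg ?_ hInt hpt)
    exact Filter.Eventually.of_forall fun y => abs_nonneg _
  have h9 : ∫ y, (rho α x)⁻¹ * (c1 * F * |w y| + c2 * W * |f (x - y)|)
      = (rho α x)⁻¹ * (c1 * F * (∫ z, |w z|) + c2 * W * (∫ z, |f z|)) := by
    have hsub : (∫ y, |f (x - y)|) = ∫ z, |f z| :=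
      integral_sub_left_eq_self (fun z => |f z|) volume x
    rw [integral_const_mul]
    congr 1
    rw [integral_add (hwi.abs.const_mul (c1 * F)) (hfi'.abs.const_mul (c2 * W)),
      integral_const_mul, integral_const_mul, hsub]
  have h10 : rho α x * |conv3 f w x| ≤
      rho α x * ((rho α x)⁻¹ * (c1 * F * (∫ z, |w z|) + c2 * W * (∫ z, |f z|))) := by
    rw [← h9]
    exact mul_le_mul_of_nonneg_left h7 hrx.le
  calc rho α x * |conv3 f w x| ≤
      rho α x * ((rho α x)⁻¹ * (c1 * F * (∫ z, |w z|) + c2 * W * (∫ z, |f z|))) := h10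
    _ = c1 * F * (∫ z, |w z|) + c2 * W * (∫ z, |f z|) := by
        field_simp
    _ = (1 - θ)⁻¹ ^ α * F * (∫ z, |w z|) + θ⁻¹ ^ α * W * (∫ z, |f z|) := by rw [hc1def, hc2def]

/-- Measurability, integrability and the L¹ bound for the convolution. -/
lemma conv3_L1 {f w : E3 → ℝ} (hfm : Measurable f) (hwm : Measurable w)
    (hfi : Integrable f) (hwi : Integrable w) :
    Measurable (conv3 f w) ∧ Integrable (conv3 f w) ∧
      (∫ x, |conv3 f w x|) ≤ (∫ x, |f x|) * (∫ x, |w x|) := by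
  have hk : Measurable fun p : E3 × E3 => f (p.1 - p.2) * w p.2 :=
    (hfm.comp (measurable_fst.sub measurable_snd)).mul (hwm.comp measurable_snd)
  have hmeas : Measurable (conv3 f w) := by
    have h : StronglyMeasurable fun x : E3 => ∫ y, f (x - y) * w y :=
      hk.stronglyMeasurable.integral_prod_right'
    exact h.measurable
  set Lf := ∫⁻ x, ‖f x‖₊ with hLf
  set Lw := ∫⁻ x, ‖w x‖₊ with hLw
  have key : (∫⁻ x, ‖conv3 f w x‖₊) ≤ Lf * Lw := by
    have h1 : (∫⁻ x, ‖conv3 f w x‖₊) ≤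
        ∫⁻ x, ∫⁻ y, (‖f (x - y)‖₊ : ENNReal) * ‖w y‖₊ := by
      refine lintegral_mono fun x => ?_
      calc (‖conv3 f w x‖₊ : ENNReal) ≤ ∫⁻ y, ‖f (x - y) * w y‖₊ :=
            enorm_integral_le_lintegral_enorm _
        _ = ∫⁻ y, (‖f (x - y)‖₊ : ENNReal) * ‖w y‖₊ := by
            simp [nnnorm_mul, ENNReal.coe_mul]
    have hkm : Measurable fun p : E3 × E3 => (‖f (p.1 - p.2)‖₊ : ENNReal) * ‖w p.2‖₊ :=
      ((hfm.comp (measurable_fst.sub measurable_snd)).enorm).mul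
        ((hwm.comp measurable_snd).enorm)
    have h2 : (∫⁻ x, ∫⁻ y, (‖f (x - y)‖₊ : ENNReal) * ‖w y‖₊)
        = ∫⁻ y, ∫⁻ x, (‖f (x - y)‖₊ : ENNReal) * ‖w y‖₊ :=
      lintegral_lintegral_swap hkm.aemeasurable
    have h3 : ∀ y : E3, (∫⁻ x, (‖f (x - y)‖₊ : ENNReal) * ‖w y‖₊) = Lf * ‖w y‖₊ := by
      intro y
      have hm1 : Measurable fun x : E3 => (‖f (x - y)‖₊ : ENNReal) :=
        (hfm.comp (measurable_id.sub measurable_const)).enorm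
      rw [lintegral_mul_const _ hm1]
      congr 1
      exact lintegral_sub_right_eq_self (fun z => (‖f z‖₊ : ENNReal)) y
    calc (∫⁻ x, ‖conv3 f w x‖₊) ≤ ∫⁻ y, ∫⁻ x, (‖f (x - y)‖₊ : ENNReal) * ‖w y‖₊ :=
          h1.trans (le_of_eq h2)
      _ = ∫⁻ y, Lf * ‖w y‖₊ := by simp_rw [h3]
      _ = Lf * Lw := lintegral_const_mul _ hwm.enorm
  have hLf_fin : Lf < ⊤ := hfi.2
  have hLw_fin : Lw < ⊤ := hwi.2
  have hint : Integrable (conv3 f w) := by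
    refine ⟨hmeas.aestronglyMeasurable, ?_⟩
    exact lt_of_le_of_lt key (ENNReal.mul_lt_top hLf_fin hLw_fin)
  refine ⟨hmeas, hint, ?_⟩
  have e1 : (∫ x, |conv3 f w x|) = (∫⁻ x, ‖conv3 f w x‖₊).toReal := by
    simp only [← enorm_eq_nnnorm]
    rw [← integral_norm_eq_lintegral_enorm hmeas.aestronglyMeasurable]
    simp [Real.norm_eq_abs]
  have e2 : (∫ x, |f x|) = Lf.toReal := by
    rw [hLf]
    simp only [← enorm_eq_nnnorm]
    rw [← integral_norm_eq_lintegral_enorm hfm.aestronglyMeasurable]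
    simp [Real.norm_eq_abs]
  have e3 : (∫ x, |w x|) = Lw.toReal := by
    rw [hLw]
    simp only [← enorm_eq_nnnorm]
    rw [← integral_norm_eq_lintegral_enorm hwm.aestronglyMeasurable]
    simp [Real.norm_eq_abs]
  rw [e1, e2, e3, ← ENNReal.toReal_mul]
  exact ENNReal.toReal_mono (ENNReal.mul_ne_top hLf_fin.ne hLw_fin.ne) key

/-- Neumann-series convergence in L^∞_ρ(ℝ³) (equations (A.3), (A.8)):
if ‖w‖_{L¹} ≤ q < 1 and w ∈ L^∞_ρ, the series Σ_{n≥1} W_n of the n-fold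
autoconvolutions of w converges in ‖·‖_{L^∞_ρ} to some W_Σ with
‖W_Σ‖_{L^∞_ρ} ≤ C ‖w‖_{L^∞_ρ}, C depending only on α and q. -/
theorem neumann_series_weighted_convergence (α q : ℝ) (hα : 3 < α)
    (hq0 : 0 < q) (hq1 : q < 1) :
    ∃ C : ℝ, 0 < C ∧
      ∀ w : E3 → ℝ, Measurable w → weightedNorm α w < ⊤ →
        (∫ x, |w x|) ≤ q →
        ∃ Wsum : E3 → ℝ, Measurable Wsum ∧
          weightedNorm α Wsum ≤ ENNReal.ofReal C * weightedNorm α w ∧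
          Filter.Tendsto
            (fun N => weightedNorm α
              (fun x => Wsum x - ∑ n ∈ Finset.range N, iterConv w n x))
            Filter.atTop (nhds 0) := by
  have hα0 : (0:ℝ) ≤ α := by linarith
  -- the comparison sequence
  set u : ℕ → ℝ := fun n => ((n : ℝ) + 1) ^ (α + 1) * q ^ n with hu_def
  have hu_nonneg : ∀ n, 0 ≤ u n := fun n => by
    have : (0:ℝ) ≤ ((n : ℝ) + 1) ^ (α + 1) := Real.rpow_nonneg (by positivity) _
    positivity
  have hu0 : u 0 = 1 := by simp [hu_def, Real.one_rpow]
  have hu_summable : Summable u := by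
    set k := ⌈α + 1⌉₊ with hk
    have hv : Summable fun n : ℕ => ((n:ℝ)) ^ k * q ^ n :=
      summable_pow_mul_geometric_of_norm_lt_one k (by rwa [Real.norm_eq_abs, abs_of_pos hq0])
    have hv1 : Summable fun n : ℕ => ((n:ℝ) + 1) ^ k * q ^ (n + 1) := by
      have := (summable_nat_add_iff (f := fun n : ℕ => ((n:ℝ)) ^ k * q ^ n) 1).mpr hv
      refine this.congr fun n => ?_
      push_cast
      ring
    have hv2 : Summable fun n : ℕ => ((n:ℝ) + 1) ^ k * q ^ n := by
      have := hv1.mul_left q⁻¹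
      refine this.congr fun n => ?_
      field_simp
      ring
    refine Summable.of_nonneg_of_le hu_nonneg (fun n => ?_) hv2
    have hk1 : α + 1 ≤ (k : ℝ) := by
      rw [hk]; exact_mod_cast Nat.le_ceil (α + 1)
    have h1 : ((n:ℝ) + 1) ^ (α + 1) ≤ ((n:ℝ) + 1) ^ (k : ℝ) :=
      Real.rpow_le_rpow_of_exponent_le
        (by linarith [Nat.cast_nonneg (α := ℝ) n]) hk1
    rw [Real.rpow_natCast] at h1
    exact mul_le_mul_of_nonneg_right h1 (by positivity)
  set S : ℝ := ∑' n, u n with hS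
  have hS1 : 1 ≤ S := by
    have := Summable.le_tsum hu_summable 0 (fun j _ => hu_nonneg j)
    rwa [hu0] at this
  refine ⟨S, by linarith, ?_⟩
  intro w hwm hwfin hwq
  set a : ℝ := (weightedNorm α w).toReal with ha_def
  have ha0 : 0 ≤ a := ENNReal.toReal_nonneg
  -- the a.e. bound on w
  have hwb : ∀ᵐ x, rho α x * |w x| ≤ a := by
    have h := ENNReal.ae_le_essSup
      (fun x => ENNReal.ofReal ((1 + ‖x‖ ^ 2) ^ (α / 2) * |w x|)) (μ := volume)
    filter_upwards [h] with x hx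
    exact (ENNReal.ofReal_le_iff_le_toReal hwfin.ne).mp hx
  have hwi : Integrable w := integrable_of_rho_bound hα hwm hwb
  have hIw0 : 0 ≤ ∫ x, |w x| := integral_nonneg fun x => abs_nonneg _
  -- the main induction
  have main : ∀ n, Measurable (iterConv w n) ∧ Integrable (iterConv w n) ∧
      (∫ x, |iterConv w n x|) ≤ q ^ (n + 1) ∧
      (∀ᵐ x, rho α x * |iterConv w n x| ≤ a * u n) := by
    intro n
    induction n with
    | zero =>
      refine ⟨hwm, hwi, by simpa [iterConv] using hwq, ?_⟩
      filter_upwards [hwb] with x hx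
      simpa [hu0, iterConv] using hx
    | succ n ih =>
      obtain ⟨hm, hi, hL1, hae⟩ := ih
      obtain ⟨hm', hi', hL1'⟩ := conv3_L1 hm hwm hi hwi
      have hL1'' : (∫ x, |iterConv w (n+1) x|) ≤ q ^ (n + 2) := by
        have : (∫ x, |iterConv w n x|) * (∫ x, |w x|) ≤ q ^ (n+1) * q := by
          have h0 : 0 ≤ ∫ x, |iterConv w n x| := integral_nonneg fun x => abs_nonneg _
          exact mul_le_mul hL1 hwq hIw0 (by positivity)
        calc (∫ x, |iterConv w (n+1) x|) ≤ _ := hL1'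
          _ ≤ q ^ (n+1) * q := this
          _ = q ^ (n + 2) := by ring
      refine ⟨hm', hi', hL1'', ?_⟩
      -- the weighted bound via conv3_bound with θ = (n+2)⁻¹
      set M : ℝ := (n : ℝ) + 2 with hM
      set N : ℝ := (n : ℝ) + 1 with hN
      have hN0 : (0:ℝ) < N := by positivity
      have hM0 : (0:ℝ) < M := by positivity
      have hθ0 : (0:ℝ) < M⁻¹ := by positivity
      have hθ1 : M⁻¹ < 1 := by
        rw [inv_eq_one_div, div_lt_one hM0, hM]
        linarith [Nat.cast_nonneg (α := ℝ) n]
      have h1θ : (1:ℝ) - M⁻¹ = N / M := by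
        field_simp [hM, hN]; ring
      have hbd := conv3_bound hα0 hi hwi (F := a * u n) (W := a)
        (by positivity) ha0 hθ0 hθ1 hae hwb
      have hgoal : ∀ x, rho α x * |iterConv w (n+1) x| ≤ a * u (n+1) := by
        intro x
        have h := hbd x
        have hcoef1 : (0:ℝ) ≤ (1 - M⁻¹)⁻¹ ^ α * (a * u n) := by
          have : (0:ℝ) ≤ (1 - M⁻¹)⁻¹ ^ α := Real.rpow_nonneg (by rw [h1θ]; positivity) _
          positivity
        have hcoef2 : (0:ℝ) ≤ (M⁻¹)⁻¹ ^ α * a := by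
          have : (0:ℝ) ≤ (M⁻¹)⁻¹ ^ α := Real.rpow_nonneg (by positivity) _
          positivity
        have h2 : rho α x * |iterConv w (n+1) x| ≤
            (1 - M⁻¹)⁻¹ ^ α * (a * u n) * q + (M⁻¹)⁻¹ ^ α * a * q ^ (n+1) := by
          calc rho α x * |iterConv w (n+1) x| ≤
              (1 - M⁻¹)⁻¹ ^ α * (a * u n) * (∫ z, |w z|) +
                (M⁻¹)⁻¹ ^ α * a * (∫ z, |iterConv w n z|) := h
            _ ≤ (1 - M⁻¹)⁻¹ ^ α * (a * u n) * q + (M⁻¹)⁻¹ ^ α * a * q ^ (n+1) := by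
                gcongr
        refine h2.trans (le_of_eq ?_)
        have e0 : ((1:ℝ) - M⁻¹)⁻¹ = M / N := by rw [h1θ, inv_div]
        have e0' : ((M:ℝ)⁻¹)⁻¹ = M := inv_inv M
        have eMN : (M / N) ^ α = M ^ α / N ^ α := Real.div_rpow hM0.le hN0.le α
        have eN : N ^ (α + 1) = N ^ α * N := by
          rw [Real.rpow_add hN0, Real.rpow_one]
        have eM : M ^ (α + 1) = M ^ α * M := by
          rw [Real.rpow_add hM0, Real.rpow_one]
        have hNα : N ^ α ≠ 0 := (Real.rpow_pos_of_pos hN0 α).ne'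
        have hun : u n = N ^ (α + 1) * q ^ n := by simp [hu_def, hN]
        have hun1 : u (n+1) = M ^ (α + 1) * q ^ (n+1) := by
          simp only [hu_def, hM]
          push_cast
          ring_nf
        rw [e0, e0', hun, hun1, eMN, eN, eM]
        field_simp
        ring
      exact Filter.Eventually.of_forall hgoal
  -- everywhere bound for n ≥ 1
  have hall : ∀ n x, rho α x * |iterConv w (n+1) x| ≤ a * u (n+1) := by
    intro n
    obtain ⟨hm, hi, hL1, hae⟩ := main n
    set M : ℝ := (n : ℝ) + 2 with hM
    set N : ℝ := (n : ℝ) + 1 with hN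
    have hN0 : (0:ℝ) < N := by positivity
    have hM0 : (0:ℝ) < M := by positivity
    have hθ0 : (0:ℝ) < M⁻¹ := by positivity
    have hθ1 : M⁻¹ < 1 := by
      rw [inv_eq_one_div, div_lt_one hM0, hM]
      linarith [Nat.cast_nonneg (α := ℝ) n]
    have h1θ : (1:ℝ) - M⁻¹ = N / M := by
      field_simp [hM, hN]; ring
    have hbd := conv3_bound hα0 hi hwi (F := a * u n) (W := a)
      (by positivity) ha0 hθ0 hθ1 hae hwb
    intro x
    have h := hbd x
    have h2 : rho α x * |iterConv w (n+1) x| ≤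
        (1 - M⁻¹)⁻¹ ^ α * (a * u n) * q + (M⁻¹)⁻¹ ^ α * a * q ^ (n+1) := by
      have hcoef1 : (0:ℝ) ≤ (1 - M⁻¹)⁻¹ ^ α * (a * u n) := by
        have : (0:ℝ) ≤ (1 - M⁻¹)⁻¹ ^ α := Real.rpow_nonneg (by rw [h1θ]; positivity) _
        positivity
      have hcoef2 : (0:ℝ) ≤ (M⁻¹)⁻¹ ^ α * a := by
        have : (0:ℝ) ≤ (M⁻¹)⁻¹ ^ α := Real.rpow_nonneg (by positivity) _
        positivity
      calc rho α x * |iterConv w (n+1) x| ≤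
          (1 - M⁻¹)⁻¹ ^ α * (a * u n) * (∫ z, |w z|) +
            (M⁻¹)⁻¹ ^ α * a * (∫ z, |iterConv w n z|) := h
        _ ≤ (1 - M⁻¹)⁻¹ ^ α * (a * u n) * q + (M⁻¹)⁻¹ ^ α * a * q ^ (n+1) := by
            gcongr
    refine h2.trans (le_of_eq ?_)
    have e0 : ((1:ℝ) - M⁻¹)⁻¹ = M / N := by rw [h1θ, inv_div]
    have e0' : ((M:ℝ)⁻¹)⁻¹ = M := inv_inv M
    have eMN : (M / N) ^ α = M ^ α / N ^ α := Real.div_rpow hM0.le hN0.le α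
    have eN : N ^ (α + 1) = N ^ α * N := by
      rw [Real.rpow_add hN0, Real.rpow_one]
    have eM : M ^ (α + 1) = M ^ α * M := by
      rw [Real.rpow_add hM0, Real.rpow_one]
    have hNα : N ^ α ≠ 0 := (Real.rpow_pos_of_pos hN0 α).ne'
    have hun : u n = N ^ (α + 1) * q ^ n := by simp [hu_def, hN]
    have hun1 : u (n+1) = M ^ (α + 1) * q ^ (n+1) := by
      simp only [hu_def, hM]
      push_cast
      ring_nf
    rw [e0, e0', hun, hun1, eMN, eN, eM]
    field_simp
    ring
  -- pointwise absolute bound for n ≥ 1 without the weight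
  have habs : ∀ n x, |iterConv w (n+1) x| ≤ a * u (n+1) := fun n x =>
    abs_le_of_rho_bound hα0 (hall n x)
  have hu_shift : Summable (fun n => u (n + 1)) :=
    (summable_nat_add_iff 1).mpr hu_summable
  -- everywhere summability
  have hsum : ∀ x, Summable fun n => iterConv w n x := by
    intro x
    rw [← summable_nat_add_iff 1]
    refine Summable.of_norm_bounded (hu_shift.mul_left a) fun n => ?_
    rw [Real.norm_eq_abs]
    exact habs n x
  set Wsum : E3 → ℝ := fun x => ∑' n, iterConv w n x with hWsum_def
  -- measurability of Wsum
  have hpartial_meas : ∀ N : ℕ, Measurable fun x => ∑ n ∈ Finset.range N, iterConv w n x :=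
    fun N => Finset.measurable_sum _ fun n _ => (main n).1
  have hWsum_meas : Measurable Wsum := by
    refine measurable_of_tendsto_metrizable hpartial_meas (tendsto_pi_nhds.mpr fun x => ?_)
    exact (hsum x).hasSum.tendsto_sum_nat
  -- the a.e. uniform bound
  have hae_all : ∀ᵐ x, ∀ n, rho α x * |iterConv w n x| ≤ a * u n := by
    filter_upwards [hwb] with x hx
    intro n
    cases n with
    | zero => simpa [hu0, iterConv] using hx
    | succ n => exact hall n x
  -- the a.e. tail bound
  have habs_ae : ∀ᵐ (x : E3), ∀ N : ℕ,
      rho α x * |Wsum x - ∑ n ∈ Finset.range N, iterConv w n x| ≤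
        a * ∑' k, u (k + N) := by
    filter_upwards [hae_all] with x hx
    intro N
    have hx_abs : ∀ n, |iterConv w n x| ≤ a * u n := fun n =>
      abs_le_of_rho_bound hα0 (hx n)
    have hdiff : Wsum x - ∑ n ∈ Finset.range N, iterConv w n x
        = ∑' k, iterConv w (k + N) x := by
      have h := Summable.sum_add_tsum_nat_add (f := fun n => iterConv w n x) N (hsum x)
      have hW : Wsum x = ∑' n, iterConv w n x := rfl
      rw [hW]
      linarith
    have hu_shiftN : Summable fun k => a * u (k + N) :=
      ((summable_nat_add_iff N).mpr hu_summable).mul_left a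
    have hsum_abs : Summable fun k => |iterConv w (k + N) x| :=
      Summable.of_nonneg_of_le (fun k => abs_nonneg _) (fun k => hx_abs (k + N)) hu_shiftN
    have hsum_wt : Summable fun k => rho α x * |iterConv w (k + N) x| :=
      hsum_abs.mul_left _
    rw [hdiff]
    have h1 : |∑' k, iterConv w (k + N) x| ≤ ∑' k, |iterConv w (k + N) x| := by
      simpa [Real.norm_eq_abs] using
        norm_tsum_le_tsum_norm (f := fun k => iterConv w (k + N) x)
          (by simpa [Real.norm_eq_abs] using hsum_abs)
    calc rho α x * |∑' k, iterConv w (k + N) x|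
        ≤ rho α x * ∑' k, |iterConv w (k + N) x| :=
          mul_le_mul_of_nonneg_left h1 (rho_pos α x).le
      _ = ∑' k, rho α x * |iterConv w (k + N) x| := tsum_mul_left.symm
      _ ≤ ∑' k, a * u (k + N) := Summable.tsum_le_tsum (fun k => hx (k + N)) hsum_wt hu_shiftN
      _ = a * ∑' k, u (k + N) := tsum_mul_left
  -- the bound on the weighted norm of Wsum
  have hae2 : ∀ᵐ x, rho α x * |Wsum x| ≤ a * S := by
    filter_upwards [habs_ae] with x hx
    have h := hx 0
    simpa [hS] using h
  have hWnorm : weightedNorm α Wsum ≤ ENNReal.ofReal S * weightedNorm α w := by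
    have h1 : weightedNorm α Wsum ≤ ENNReal.ofReal (a * S) := by
      refine essSup_le_of_ae_le _ ?_
      filter_upwards [hae2] with x hx
      exact ENNReal.ofReal_le_ofReal hx
    calc weightedNorm α Wsum ≤ ENNReal.ofReal (a * S) := h1
      _ = ENNReal.ofReal S * weightedNorm α w := by
          rw [ENNReal.ofReal_mul ha0, ha_def, ENNReal.ofReal_toReal hwfin.ne]
          exact mul_comm _ _
  -- the tail estimate on the weighted norm
  have hbound : ∀ N : ℕ, weightedNorm α
      (fun x => Wsum x - ∑ n ∈ Finset.range N, iterConv w n x) ≤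
        ENNReal.ofReal (a * ∑' k, u (k + N)) := by
    intro N
    refine essSup_le_of_ae_le _ ?_
    filter_upwards [habs_ae] with x hx
    exact ENNReal.ofReal_le_ofReal (hx N)
  have htail : Filter.Tendsto (fun N => a * ∑' k, u (k + N)) Filter.atTop (nhds 0) := by
    have h := (tendsto_sum_nat_add u).const_mul a
    simpa using h
  have hofReal : Filter.Tendsto (fun N => ENNReal.ofReal (a * ∑' k, u (k + N)))
      Filter.atTop (nhds 0) := by
    have h := ENNReal.tendsto_ofReal htail
    simpa using h
  refine ⟨Wsum, hWsum_meas, hWnorm, ?_⟩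
  exact tendsto_of_tendsto_of_tendsto_of_le_of_le tendsto_const_nhds hofReal
    (fun N => zero_le) hbound
end
end
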